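/- Let M → M' be a matroid perspective on a finite linearly ordered set E and A ⊆ E. Set A' = (A \ Q_M(A)) ∪ Ext_M(A). Then P_{M'}(A') = P_{M'}(A), Int_{M'}(A') = Int_{M'}(A), Q_M(A') = Ext_M(A), and Ext_M(A') = Q_M(A). In particular the map A ↦ (A \ Q_M(A)) ∪ Ext_M(A) is an involution of 2^E exchanging the nullity nl_M(A) = |Q_M(A)| and the external activity ε_M(A) = |Ext_M(A)|. -/

import Mathlib

open Set

/-- `e` is the smallest element of `C`. -/
def SmallestIn {α : Type*} [LinearOrder α] (e : α) (C : Set α) : Prop :=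
  e ∈ C ∧ ∀ f ∈ C, e ≤ f

/-- `C` is a circuit of `M`: a minimal dependent set. -/
def IsCircuit {α : Type*} (M : Matroid α) (C : Set α) : Prop :=
  ¬ M.Indep C ∧ ∀ x ∈ C, M.Indep (C \ {x})

/-- A cocircuit is a circuit of the dual matroid. -/
def IsCocircuit {α : Type*} (M : Matroid α) (C : Set α) : Prop :=
  IsCircuit M✶ C

/-- `P_M(A)`: elements outside `A` that are smallest in some cocircuit avoiding `A`. -/
def Pset {α : Type*} [LinearOrder α] (M : Matroid α) (A : Set α) : Set α :=
  {e | e ∉ A ∧ ∃ C, IsCocircuit M C ∧ C ⊆ Aᶜ ∧ SmallestIn e C}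

/-- `Q_M(A)`: elements of `A` that are smallest in some circuit contained in `A`. -/
def Qset {α : Type*} [LinearOrder α] (M : Matroid α) (A : Set α) : Set α :=
  {e | e ∈ A ∧ ∃ C, IsCircuit M C ∧ C ⊆ A ∧ SmallestIn e C}

/-- Externally active elements of `A`. -/
def ExtSet {α : Type*} [LinearOrder α] (M : Matroid α) (A : Set α) : Set α :=
  {e | e ∉ A ∧ ∃ C, IsCircuit M C ∧ C ⊆ A ∪ {e} ∧ SmallestIn e C}

/-- Internally active elements of `A`. -/
def IntSet {α : Type*} [LinearOrder α] (M : Matroid α) (A : Set α) : Set α :=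
  {e | e ∈ A ∧ ∃ C, IsCocircuit M C ∧ C ⊆ Aᶜ ∪ {e} ∧ SmallestIn e C}

/-- The rank of a set: the largest cardinality of an independent subset. -/
noncomputable def rk {α : Type*} (M : Matroid α) (A : Set α) : ℕ :=
  sSup (Set.ncard '' {I | I ⊆ A ∧ M.Indep I})

/-- Matroid perspective (strong-map / quotient condition, form (MP3)). -/
def Perspective {α : Type*} (M M' : Matroid α) : Prop :=
  ∀ C D : Set α, IsCircuit M C → IsCocircuit M' D → (C ∩ D).ncard ≠ 1

/-- Rank codrop of a subset in a matroid perspective. -/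
noncomputable def rcd {α : Type*} (M M' : Matroid α) (A : Set α) : ℕ :=
  ((rk M Set.univ : ℤ) - rk M' Set.univ - ((rk M A : ℤ) - rk M' A)).toNat


section AuxLemmas

variable {α : Type*} {M M' : Matroid α} {C D W Z A : Set α} {e : α}



/-- Every element of a circuit is in the closure of the rest. -/
lemma circuit_mem_closure (hE : M.E = univ) (hC : IsCircuit M C) (he : e ∈ C) :
    e ∈ M.closure (C \ {e}) := by
  by_contra h
  have hI : M.Indep (C \ {e}) := hC.2 e he
  have : M.Indep (insert e (C \ {e})) := by
    rw [hI.insert_indep_iff_of_notMem (by simp)]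
    exact ⟨by simp [hE], h⟩
  rw [insert_diff_singleton, insert_eq_self.2 he] at this
  exact hC.1 this

/-- Every dependent set contains a circuit. -/
lemma exists_circuit_of_dep [Fintype α] (hD : ¬ M.Indep D) : ∃ C ⊆ D, IsCircuit M C := by
  have key : ∀ n (D : Set α), D.ncard = n → ¬ M.Indep D → ∃ C ⊆ D, IsCircuit M C := by
    intro n
    induction n using Nat.strong_induction_on with
    | _ n ih =>
      intro D hn hD
      by_cases h : ∀ x ∈ D, M.Indep (D \ {x})
      · exact ⟨D, subset_rfl, hD, h⟩
      · push_neg at h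
        obtain ⟨x, hx, hxD⟩ := h
        obtain ⟨C, hC1, hC2⟩ := ih (D \ {x}).ncard
          (hn ▸ Set.ncard_diff_singleton_lt_of_mem hx (toFinite D)) _ rfl hxD
        exact ⟨C, hC1.trans diff_subset, hC2⟩
  exact key D.ncard D rfl hD

/-- Fundamental circuit. -/
lemma exists_circuit_of_mem_closure [Fintype α] (hE : M.E = univ)
    (he : e ∈ M.closure Z) (heZ : e ∉ Z) :
    ∃ C, IsCircuit M C ∧ e ∈ C ∧ C ⊆ insert e Z := by
  obtain ⟨I, hI⟩ := M.exists_isBasis Z (by simp [hE])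
  have he' : e ∈ M.closure I := by rwa [hI.closure_eq_closure]
  have heI : e ∉ I := fun h => heZ (hI.subset h)
  have hdep : ¬ M.Indep (insert e I) := by
    intro hind
    have := hind.notMem_closure_diff_of_mem (mem_insert e I)
    rw [insert_diff_self_of_notMem heI] at this
    exact this he'
  obtain ⟨C, hCsub, hC⟩ := exists_circuit_of_dep hdep
  have heC : e ∈ C := by
    by_contra h
    exact hC.1 (hI.indep.subset (fun x hx => by
      rcases hCsub hx with h' | h'
      · exact absurd (h' ▸ hx) h
      · exact h'))
  exact ⟨C, hC, heC, hCsub.trans (insert_subset_insert hI.subset)⟩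

/-- A circuit and a cocircuit never meet in exactly one element. -/
lemma circuit_cocircuit (hE : M.E = univ) (hC : IsCircuit M C) (hD : IsCocircuit M D) :
    (C ∩ D).ncard ≠ 1 := by
  intro h1
  obtain ⟨f, hf⟩ := Set.ncard_eq_one.mp h1
  have hfC : f ∈ C := by have : f ∈ C ∩ D := hf ▸ rfl; exact this.1
  have hfD : f ∈ D := by have : f ∈ C ∩ D := hf ▸ rfl; exact this.2
  have hDE : D ⊆ M.E := by simp [hE]
  -- f is in the closure of univ \ D
  have hsub : C \ {f} ⊆ univ \ D := by
    rintro x ⟨hxC, hxf⟩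
    refine ⟨trivial, fun hxD => hxf ?_⟩
    have : x ∈ C ∩ D := ⟨hxC, hxD⟩
    rw [hf] at this; exact this
  have hfcl : f ∈ M.closure (univ \ D) :=
    M.closure_subset_closure hsub (circuit_mem_closure hE hC hfC)
  -- D \ {f} is coindependent
  have hco : M✶.Indep (D \ {f}) := hD.2 f hfD
  rw [Matroid.dual_indep_iff_exists (diff_subset.trans hDE)] at hco
  obtain ⟨B, hB, hdisj⟩ := hco
  -- derive a base inside univ \ D, contradicting ¬ M✶.Indep D
  have hspan : ∃ B₁, M.IsBase B₁ ∧ Disjoint D B₁ := by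
    by_cases hfB : f ∈ B
    · have hBf : B \ {f} ⊆ univ \ D := by
        rintro x ⟨hxB, hxf⟩
        refine ⟨trivial, fun hxD => ?_⟩
        exact (disjoint_left.1 hdisj ⟨hxD, hxf⟩) hxB
      obtain ⟨J, hJ, hBJ⟩ := (hB.indep.subset diff_subset).subset_isBasis_of_subset hBf
        (by simp [hE])
      have hfJ : f ∈ M.closure J := by rw [hJ.closure_eq_closure]; exact hfcl
      have : M.E ⊆ M.closure (univ \ D) := by
        have h1 : M.closure B ⊆ M.closure (insert f J) :=
          M.closure_subset_closure (fun x hx => by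
            rcases eq_or_ne x f with rfl | hxf
            · exact mem_insert _ _
            · exact mem_insert_of_mem _ (hBJ ⟨hx, hxf⟩))
        rw [hB.closure_eq] at h1
        rwa [Matroid.closure_insert_eq_of_mem_closure hfJ, hJ.closure_eq_closure] at h1
      have hsp : M.Spanning (univ \ D) := by
        rw [Matroid.spanning_iff_ground_subset_closure (by simp [hE])]; exact this
      obtain ⟨B₁, hB₁, hB₁sub⟩ := hsp.exists_isBase_subset
      exact ⟨B₁, hB₁, disjoint_left.2 fun x hxD hxB₁ => (hB₁sub hxB₁).2 hxD⟩
    · refine ⟨B, hB, disjoint_left.2 fun x hxD hxB => ?_⟩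
      rcases eq_or_ne x f with rfl | hxf
      · exact hfB hxB
      · exact (disjoint_left.1 hdisj ⟨hxD, hxf⟩) hxB
  obtain ⟨B₁, hB₁, hB₁D⟩ := hspan
  exact hD.1 ((Matroid.dual_indep_iff_exists hDE).2 ⟨B₁, hB₁, hB₁D⟩)

/-- If `e ∉ cl(W)` there is a cocircuit through `e` avoiding `W`. -/
lemma exists_cocircuit_of_not_mem_closure (hE : M.E = univ) (he : e ∉ M.closure W) :
    ∃ D, IsCocircuit M D ∧ e ∈ D ∧ D ∩ W = ∅ := by
  obtain ⟨I, hI⟩ := M.exists_isBasis W (by simp [hE])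
  have heI' : e ∉ M.closure I := by rwa [hI.closure_eq_closure]
  have heI : e ∉ I := fun h => heI' (M.mem_closure_of_mem h (by simp [hE]))
  have hins : M.Indep (insert e I) := by
    rw [hI.indep.insert_indep_iff_of_notMem heI]
    exact ⟨by simp [hE], heI'⟩
  obtain ⟨B, hB, hsub⟩ := hins.exists_isBase_superset
  set H := M.closure (B \ {e}) with hH
  have heB : e ∈ B := hsub (mem_insert e I)
  have heH : e ∉ H := hB.indep.notMem_closure_diff_of_mem heB
  have hIB : I ⊆ B \ {e} := fun x hx =>
    ⟨hsub (mem_insert_of_mem _ hx), fun h => heI (h ▸ hx)⟩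
  have hWH : W ⊆ H := fun x hx =>
    M.closure_subset_closure hIB (hI.subset_closure hx)
  have hHE : H ⊆ M.E := M.closure_subset_ground _
  refine ⟨univ \ H, ⟨?_, ?_⟩, ⟨trivial, heH⟩, ?_⟩
  · -- not coindependent
    intro hind
    rw [Matroid.dual_indep_iff_exists (by simp [hE])] at hind
    obtain ⟨B', hB', hdisj⟩ := hind
    have hB'H : B' ⊆ H := fun x hx => by
      by_contra hxH
      exact (disjoint_left.1 hdisj ⟨trivial, hxH⟩) hx
    have : M.E ⊆ H := by
      have := M.closure_subset_closure hB'H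
      rw [hB'.closure_eq, hH, Matroid.closure_closure] at this
      exact this
    exact heH (this (by simp [hE]))
  · -- every deletion is coindependent
    intro x hx
    rw [Matroid.dual_indep_iff_exists ((diff_subset).trans (by simp [hE]))]
    rcases eq_or_ne x e with rfl | hxe
    · refine ⟨B, hB, disjoint_left.2 ?_⟩
      rintro y ⟨⟨-, hyH⟩, hyx⟩ hyB
      exact hyH (M.subset_closure _ (diff_subset.trans (by simp [hE])) ⟨hyB, hyx⟩)
    · have hxH : x ∉ H := hx.2
      have hxB : x ∉ B \ {e} := fun h =>
        hxH (M.subset_closure _ (diff_subset.trans (by simp [hE])) h)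
      have hxB' : x ∉ B := fun h => hxB ⟨h, hxe⟩
      have hind : M.Indep (insert x (B \ {e})) := by
        rw [(hB.indep.subset diff_subset).insert_indep_iff_of_notMem hxB]
        exact ⟨by simp [hE], hxH⟩
      have hbase := hB.exchange_isBase_of_indep hxB' hind
      refine ⟨_, hbase, disjoint_left.2 ?_⟩
      rintro y ⟨⟨-, hyH⟩, hyx : y ≠ x⟩ hy
      rcases hy with rfl | hy
      · exact hyx rfl
      · exact hyH (M.subset_closure _ (diff_subset.trans (by simp [hE])) hy)
  · rw [eq_empty_iff_forall_notMem]
    rintro x ⟨⟨-, hxH⟩, hxW⟩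
    exact hxH (hWH hxW)

/-- A cocircuit avoiding `W` through `e` certifies `e ∉ cl(W)`. -/
lemma not_mem_closure_of_cocircuit [Fintype α] (hE : M.E = univ) (hD : IsCocircuit M D)
    (he : e ∈ D) (hdisj : D ∩ W = ∅) : e ∉ M.closure W := by
  intro hecl
  have heW : e ∉ W := fun h => (eq_empty_iff_forall_notMem.1 hdisj e) ⟨he, h⟩
  obtain ⟨C, hC, heC, hCsub⟩ := exists_circuit_of_mem_closure hE hecl heW
  have : C ∩ D = {e} := by
    apply Subset.antisymm
    · rintro x ⟨hxC, hxD⟩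
      rcases hCsub hxC with rfl | hx
      · rfl
      · exact ((eq_empty_iff_forall_notMem.1 hdisj x) ⟨hxD, hx⟩).elim
    · rintro x rfl; exact ⟨heC, he⟩
  exact circuit_cocircuit hE hC hD (by rw [this, ncard_singleton])

/-- Perspective implies closure monotonicity between the matroids. -/
lemma perspective_closure [Fintype α] (h : Perspective M M') (hE : M.E = univ)
    (hE' : M'.E = univ) (he : e ∈ M.closure Z) : e ∈ M'.closure Z := by
  by_cases heZ : e ∈ Z
  · exact M'.mem_closure_of_mem heZ (by simp [hE'])
  by_contra hecl
  obtain ⟨D, hD, heD, hdisj⟩ := exists_cocircuit_of_not_mem_closure hE' hecl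
  obtain ⟨C, hC, heC, hCsub⟩ := exists_circuit_of_mem_closure hE he heZ
  have : C ∩ D = {e} := by
    apply Subset.antisymm
    · rintro x ⟨hxC, hxD⟩
      rcases hCsub hxC with rfl | hx
      · rfl
      · exact ((eq_empty_iff_forall_notMem.1 hdisj x) ⟨hxD, hx⟩).elim
    · rintro x rfl; exact ⟨heC, heD⟩
  exact h C D hC hD (by rw [this, ncard_singleton])


variable [Fintype α] [LinearOrder α]

lemma mem_Qset_iff (hE : M.E = univ) :
    e ∈ Qset M A ↔ e ∈ A ∧ e ∈ M.closure (A ∩ Ioi e) := by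
  constructor
  · rintro ⟨heA, C, hC, hCA, heC, hmin⟩
    refine ⟨heA, M.closure_subset_closure ?_ (circuit_mem_closure hE hC heC)⟩
    rintro x ⟨hxC, hxe⟩
    exact ⟨hCA hxC, lt_of_le_of_ne (hmin x hxC) (Ne.symm hxe)⟩
  · rintro ⟨heA, hcl⟩
    obtain ⟨C, hC, heC, hCsub⟩ := exists_circuit_of_mem_closure hE hcl (by simp)
    refine ⟨heA, C, hC, ?_, heC, ?_⟩
    · intro x hx
      rcases hCsub hx with rfl | hx'
      · exact heA
      · exact hx'.1
    · intro x hx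
      rcases hCsub hx with rfl | hx'
      · exact le_refl _
      · exact le_of_lt hx'.2

lemma mem_ExtSet_iff (hE : M.E = univ) :
    e ∈ ExtSet M A ↔ e ∉ A ∧ e ∈ M.closure (A ∩ Ioi e) := by
  constructor
  · rintro ⟨heA, C, hC, hCA, heC, hmin⟩
    refine ⟨heA, M.closure_subset_closure ?_ (circuit_mem_closure hE hC heC)⟩
    rintro x ⟨hxC, hxe⟩
    rcases hCA hxC with hx | hx
    · exact ⟨hx, lt_of_le_of_ne (hmin x hxC) (Ne.symm hxe)⟩
    · exact absurd hx hxe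
  · rintro ⟨heA, hcl⟩
    obtain ⟨C, hC, heC, hCsub⟩ := exists_circuit_of_mem_closure hE hcl (by simp)
    refine ⟨heA, C, hC, ?_, heC, ?_⟩
    · intro x hx
      rcases hCsub hx with rfl | hx'
      · exact Or.inr rfl
      · exact Or.inl hx'.1
    · intro x hx
      rcases hCsub hx with rfl | hx'
      · exact le_refl _
      · exact le_of_lt hx'.2

lemma mem_Pset_iff (hE : M.E = univ) :
    e ∈ Pset M A ↔ e ∉ A ∧ e ∉ M.closure ((A ∩ Ioi e) ∪ Iio e) := by
  constructor
  · rintro ⟨heA, D, hD, hDA, heD, hmin⟩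
    refine ⟨heA, not_mem_closure_of_cocircuit hE hD heD ?_⟩
    rw [eq_empty_iff_forall_notMem]
    rintro x ⟨hxD, hx⟩
    rcases hx with ⟨hxA, -⟩ | hx
    · exact (hDA hxD) hxA
    · exact absurd (hmin x hxD) (not_le.2 hx)
  · rintro ⟨heA, hcl⟩
    obtain ⟨D, hD, heD, hdisj⟩ := exists_cocircuit_of_not_mem_closure hE hcl
    have hmin : ∀ x ∈ D, e ≤ x := fun x hx => by
      by_contra hlt
      exact (eq_empty_iff_forall_notMem.1 hdisj x) ⟨hx, Or.inr (not_le.1 hlt)⟩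
    refine ⟨heA, D, hD, ?_, heD, hmin⟩
    intro x hx
    rcases eq_or_ne x e with rfl | hxe
    · exact heA
    · intro hxA
      exact (eq_empty_iff_forall_notMem.1 hdisj x)
        ⟨hx, Or.inl ⟨hxA, lt_of_le_of_ne (hmin x hx) (Ne.symm hxe)⟩⟩

lemma mem_IntSet_iff (hE : M.E = univ) :
    e ∈ IntSet M A ↔ e ∈ A ∧ e ∉ M.closure ((A ∩ Ioi e) ∪ Iio e) := by
  constructor
  · rintro ⟨heA, D, hD, hDA, heD, hmin⟩
    refine ⟨heA, not_mem_closure_of_cocircuit hE hD heD ?_⟩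
    rw [eq_empty_iff_forall_notMem]
    rintro x ⟨hxD, hx⟩
    rcases hx with ⟨hxA, hxe⟩ | hx
    · rcases hDA hxD with h | rfl
      · exact h hxA
      · exact lt_irrefl _ hxe
    · exact absurd (hmin x hxD) (not_le.2 hx)
  · rintro ⟨heA, hcl⟩
    obtain ⟨D, hD, heD, hdisj⟩ := exists_cocircuit_of_not_mem_closure hE hcl
    have hmin : ∀ x ∈ D, e ≤ x := fun x hx => by
      by_contra hlt
      exact (eq_empty_iff_forall_notMem.1 hdisj x) ⟨hx, Or.inr (not_le.1 hlt)⟩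
    refine ⟨heA, D, hD, ?_, heD, hmin⟩
    intro x hx
    rcases eq_or_ne x e with rfl | hxe
    · exact Or.inr rfl
    · refine Or.inl fun hxA => ?_
      exact (eq_empty_iff_forall_notMem.1 hdisj x)
        ⟨hx, Or.inl ⟨hxA, lt_of_le_of_ne (hmin x hx) (Ne.symm hxe)⟩⟩

/-- Key lemma: the involution preserves all truncated `M`-closures. -/
lemma closureA (hE : M.E = univ) (A : Set α) (e : α) :
    M.closure (((A \ Qset M A) ∪ ExtSet M A) ∩ Ioi e) = M.closure (A ∩ Ioi e) := by
  have key : ∀ n (e : α), (Ioi e).ncard = n →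
      M.closure (((A \ Qset M A) ∪ ExtSet M A) ∩ Ioi e) = M.closure (A ∩ Ioi e) := by
    intro n
    induction n using Nat.strong_induction_on with
    | _ n ih =>
      intro e hn
      have h1 : ((A \ Qset M A) ∪ ExtSet M A) ∩ Ioi e ⊆ M.closure (A ∩ Ioi e) := by
        rintro f ⟨hf, hfe⟩
        rcases hf with ⟨hfA, -⟩ | hfX
        · exact M.mem_closure_of_mem ⟨hfA, hfe⟩ (by simp [hE])
        · have := ((mem_ExtSet_iff hE).1 hfX).2
          exact M.closure_subset_closure
            (inter_subset_inter_right A (Ioi_subset_Ioi (le_of_lt hfe))) this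
      have h2 : A ∩ Ioi e ⊆ M.closure (((A \ Qset M A) ∪ ExtSet M A) ∩ Ioi e) := by
        rintro f ⟨hfA, hfe⟩
        by_cases hfQ : f ∈ Qset M A
        · have hcl := ((mem_Qset_iff hE).1 hfQ).2
          have hlt : (Ioi f).ncard < n := by
            rw [← hn]
            exact Set.ncard_lt_ncard
              ⟨Ioi_subset_Ioi (le_of_lt hfe), fun hss => lt_irrefl f (hss hfe)⟩
              (toFinite _)
          rw [← ih _ hlt f rfl] at hcl
          exact M.closure_subset_closure
            (inter_subset_inter_right _ (Ioi_subset_Ioi (le_of_lt hfe))) hcl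
        · exact M.mem_closure_of_mem ⟨Or.inl ⟨hfA, hfQ⟩, hfe⟩ (by simp [hE])
      exact Subset.antisymm (Matroid.closure_subset_closure_of_subset_closure h1)
        (Matroid.closure_subset_closure_of_subset_closure h2)
  exact key _ e rfl

/-- Key lemma: the involution preserves all truncated `M'`-closures. -/
lemma closureB (h : Perspective M M') (hE : M.E = univ) (hE' : M'.E = univ)
    (A : Set α) (e : α) :
    M'.closure ((((A \ Qset M A) ∪ ExtSet M A) ∩ Ioi e) ∪ Iio e) =
      M'.closure ((A ∩ Ioi e) ∪ Iio e) := by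
  have h1 : (((A \ Qset M A) ∪ ExtSet M A) ∩ Ioi e) ∪ Iio e ⊆
      M'.closure ((A ∩ Ioi e) ∪ Iio e) := by
    rintro f (⟨hf, hfe⟩ | hf)
    · rcases hf with ⟨hfA, -⟩ | hfX
      · exact M'.mem_closure_of_mem (Or.inl ⟨hfA, hfe⟩) (by simp [hE'])
      · have := perspective_closure h hE hE' ((mem_ExtSet_iff hE).1 hfX).2
        exact M'.closure_subset_closure
          ((inter_subset_inter_right A (Ioi_subset_Ioi (le_of_lt hfe))).trans
            subset_union_left) this
    · exact M'.mem_closure_of_mem (Or.inr hf) (by simp [hE'])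
  have h2 : (A ∩ Ioi e) ∪ Iio e ⊆
      M'.closure ((((A \ Qset M A) ∪ ExtSet M A) ∩ Ioi e) ∪ Iio e) := by
    rintro f (⟨hfA, hfe⟩ | hf)
    · by_cases hfQ : f ∈ Qset M A
      · have hcl := ((mem_Qset_iff hE).1 hfQ).2
        rw [← closureA hE A f] at hcl
        have := perspective_closure h hE hE' hcl
        exact M'.closure_subset_closure
          ((inter_subset_inter_right _ (Ioi_subset_Ioi (le_of_lt hfe))).trans
            subset_union_left) this
      · exact M'.mem_closure_of_mem (Or.inl ⟨Or.inl ⟨hfA, hfQ⟩, hfe⟩) (by simp [hE'])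
    · exact M'.mem_closure_of_mem (Or.inr hf) (by simp [hE'])
  exact Subset.antisymm (Matroid.closure_subset_closure_of_subset_closure h1)
    (Matroid.closure_subset_closure_of_subset_closure h2)


end AuxLemmas

theorem duality_involution {α : Type*} [Fintype α] [LinearOrder α]
    (M M' : Matroid α) (hE : M.E = Set.univ) (hE' : M'.E = Set.univ)
    (h : Perspective M M') (A : Set α) :
    Pset M' ((A \ Qset M A) ∪ ExtSet M A) = Pset M' A ∧
    IntSet M' ((A \ Qset M A) ∪ ExtSet M A) = IntSet M' A ∧
    Qset M ((A \ Qset M A) ∪ ExtSet M A) = ExtSet M A ∧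
    ExtSet M ((A \ Qset M A) ∪ ExtSet M A) = Qset M A ∧
    ((((A \ Qset M A) ∪ ExtSet M A) \ Qset M ((A \ Qset M A) ∪ ExtSet M A)) ∪
        ExtSet M ((A \ Qset M A) ∪ ExtSet M A)) = A := by
  have hmemA' : ∀ e, e ∈ M.closure (A ∩ Ioi e) →
      (e ∈ (A \ Qset M A) ∪ ExtSet M A ↔ e ∉ A) := by
    intro e hcl
    constructor
    · rintro (⟨heA, heQ⟩ | heX)
      · exact absurd ((mem_Qset_iff hE).2 ⟨heA, hcl⟩) heQ
      · exact ((mem_ExtSet_iff hE).1 heX).1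
    · intro heA; exact Or.inr ((mem_ExtSet_iff hE).2 ⟨heA, hcl⟩)
  have hmemA'n : ∀ e, e ∉ M.closure (A ∩ Ioi e) →
      (e ∈ (A \ Qset M A) ∪ ExtSet M A ↔ e ∈ A) := by
    intro e hcl
    constructor
    · rintro (⟨heA, -⟩ | heX)
      · exact heA
      · exact absurd ((mem_ExtSet_iff hE).1 heX).2 hcl
    · intro heA; exact Or.inl ⟨heA, fun hQ => hcl ((mem_Qset_iff hE).1 hQ).2⟩
  have hQ' : Qset M ((A \ Qset M A) ∪ ExtSet M A) = ExtSet M A := by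
    ext e
    rw [mem_Qset_iff hE, mem_ExtSet_iff hE, closureA hE A e]
    constructor
    · rintro ⟨heA', hcl⟩; exact ⟨(hmemA' e hcl).1 heA', hcl⟩
    · rintro ⟨heA, hcl⟩; exact ⟨(hmemA' e hcl).2 heA, hcl⟩
  have hX' : ExtSet M ((A \ Qset M A) ∪ ExtSet M A) = Qset M A := by
    ext e
    rw [mem_ExtSet_iff hE, mem_Qset_iff hE, closureA hE A e]
    constructor
    · rintro ⟨heA', hcl⟩
      by_contra hmem
      have heA : e ∉ A := fun hx => hmem ⟨hx, hcl⟩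
      exact heA' ((hmemA' e hcl).2 heA)
    · rintro ⟨heA, hcl⟩
      exact ⟨fun heA' => ((hmemA' e hcl).1 heA') heA, hcl⟩
  have hP : Pset M' ((A \ Qset M A) ∪ ExtSet M A) = Pset M' A := by
    ext e
    rw [mem_Pset_iff hE', mem_Pset_iff hE', closureB h hE hE' A e]
    have key : e ∉ M'.closure ((A ∩ Ioi e) ∪ Iio e) → e ∉ M.closure (A ∩ Ioi e) :=
      fun hcl' hc => hcl' (M'.closure_subset_closure subset_union_left
        (perspective_closure h hE hE' hc))
    constructor
    · rintro ⟨heA', hcl'⟩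
      exact ⟨fun heA => heA' ((hmemA'n e (key hcl')).2 heA), hcl'⟩
    · rintro ⟨heA, hcl'⟩
      exact ⟨fun heA' => heA ((hmemA'n e (key hcl')).1 heA'), hcl'⟩
  have hI : IntSet M' ((A \ Qset M A) ∪ ExtSet M A) = IntSet M' A := by
    ext e
    rw [mem_IntSet_iff hE', mem_IntSet_iff hE', closureB h hE hE' A e]
    have key : e ∉ M'.closure ((A ∩ Ioi e) ∪ Iio e) → e ∉ M.closure (A ∩ Ioi e) :=
      fun hcl' hc => hcl' (M'.closure_subset_closure subset_union_left
        (perspective_closure h hE hE' hc))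
    constructor
    · rintro ⟨heA', hcl'⟩
      exact ⟨(hmemA'n e (key hcl')).1 heA', hcl'⟩
    · rintro ⟨heA, hcl'⟩
      exact ⟨(hmemA'n e (key hcl')).2 heA, hcl'⟩
  refine ⟨hP, hI, hQ', hX', ?_⟩
  rw [hQ', hX']
  ext e
  by_cases hcl : e ∈ M.closure (A ∩ Ioi e)
  · constructor
    · rintro (⟨heA', heX⟩ | heQ)
      · by_contra heA
        exact heX ((mem_ExtSet_iff hE).2 ⟨heA, hcl⟩)
      · exact ((mem_Qset_iff hE).1 heQ).1
    · intro heA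
      exact Or.inr ((mem_Qset_iff hE).2 ⟨heA, hcl⟩)
  · constructor
    · rintro (⟨heA', -⟩ | heQ)
      · exact (hmemA'n e hcl).1 heA'
      · exact absurd ((mem_Qset_iff hE).1 heQ).2 hcl
    · intro heA
      exact Or.inl ⟨(hmemA'n e hcl).2 heA,
        fun heX => hcl ((mem_ExtSet_iff hE).1 heX).2⟩
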